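/- Let α ∈ ℝ⁶, with coordinates α_ij indexed by unordered pairs {i,j} ⊂ {1,2,3,4}, satisfy α_ij = α_kh and α_ij + α_ik + α_ih = π for every partition {i,j,k,h} = {1,2,3,4}. Then the function F_α : ℝ⁶ → ℝ, F_α(l) = cov(l) − Σ_{1≤i<j≤4} α_ij l_ij, is invariant under the ℝ⁴-action: F_α(w + l) = F_α(l) for all l ∈ ℝ⁶ and all w ∈ ℝ⁴. -/

import Mathlib

noncomputable section

open Real Set Filter

/-- The generalized Euclidean triangle angle `aᵢ(x)` opposite the side of length `x i`,
for a generalized triangle with (positive) side lengths `x 0, x 1, x 2`: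
it is `π` if `x i ≥ x j + x k`, `0` if some other side is at least the sum of the
remaining two, and otherwise the usual Euclidean angle `arccos((xⱼ²+x_k²−xᵢ²)/(2xⱼx_k))`. -/
noncomputable def genAngle (x : Fin 3 → ℝ) (i : Fin 3) : ℝ :=
  if x (i + 1) + x (i + 2) ≤ x i then Real.pi
  else if x i + x (i + 2) ≤ x (i + 1) ∨ x i + x (i + 1) ≤ x (i + 2) then 0
  else Real.arccos
    ((x (i + 1) ^ 2 + x (i + 2) ^ 2 - x i ^ 2) / (2 * x (i + 1) * x (i + 2)))

/-- The three side lengths `e^{(l₁₂+l₃₄)/2}, e^{(l₁₃+l₂₄)/2}, e^{(l₁₄+l₂₃)/2}` of the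
generalized Euclidean triangle associated to a length vector `l ∈ ℝ⁶`.
Edge indices: `0 ↔ {1,2}, 1 ↔ {1,3}, 2 ↔ {1,4}, 3 ↔ {2,3}, 4 ↔ {2,4}, 5 ↔ {3,4}`,
so opposite pairs of edges are `(0,5), (1,4), (2,3)`. -/
noncomputable def triSides (l : Fin 6 → ℝ) (k : Fin 3) : ℝ :=
  if k.val = 0 then Real.exp ((l 0 + l 5) / 2)
  else if k.val = 1 then Real.exp ((l 1 + l 4) / 2)
  else Real.exp ((l 2 + l 3) / 2)

/-- The quad (pair of opposite edges) containing the edge `p`. -/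
def quadIndex (p : Fin 6) : Fin 3 :=
  if p.val = 0 ∨ p.val = 5 then 0 else if p.val = 1 ∨ p.val = 4 then 1 else 2

/-- The extended dihedral angle `α_p(l)` of the generalized decorated tetrahedron with
length vector `l ∈ ℝ⁶` at the edge `p`. -/
noncomputable def dihedral (l : Fin 6 → ℝ) (p : Fin 6) : ℝ :=
  genAngle (triSides l) (quadIndex p)

/-- The edge index in `Fin 6` of the edge `{i,j}` of the tetrahedron on vertices `Fin 4`
(junk value for `i = j`). -/
def edgeOf (i j : Fin 4) : Fin 6 :=
  if (i.val = 0 ∧ j.val = 1) ∨ (i.val = 1 ∧ j.val = 0) then 0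
  else if (i.val = 0 ∧ j.val = 2) ∨ (i.val = 2 ∧ j.val = 0) then 1
  else if (i.val = 0 ∧ j.val = 3) ∨ (i.val = 3 ∧ j.val = 0) then 2
  else if (i.val = 1 ∧ j.val = 2) ∨ (i.val = 2 ∧ j.val = 1) then 3
  else if (i.val = 1 ∧ j.val = 3) ∨ (i.val = 3 ∧ j.val = 1) then 4
  else 5

/-- The two endpoints of the edge `p` of the tetrahedron. -/
def endPts (p : Fin 6) : Fin 4 × Fin 4 :=
  if p.val = 0 then (0, 1) else if p.val = 1 then (0, 2) else if p.val = 2 then (0, 3)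
  else if p.val = 3 then (1, 2) else if p.val = 4 then (1, 3) else (2, 3)

/-- The Lobachevsky function `Λ(x) = −∫₀ˣ ln|2 sin t| dt`. -/
noncomputable def lob (x : ℝ) : ℝ := -∫ t in (0:ℝ)..x, Real.log |2 * Real.sin t|

/-- The volume of the generalized decorated tetrahedron with length vector `l`. -/
noncomputable def vol6 (l : Fin 6 → ℝ) : ℝ := (1 / 2 : ℝ) * ∑ p : Fin 6, lob (dihedral l p)

/-- The co-volume function `cov(l) = 2 vol(l) + Σ α_p(l) l_p` on `ℝ⁶`. -/
noncomputable def cov6 (l : Fin 6 → ℝ) : ℝ := 2 * vol6 l + ∑ p : Fin 6, dihedral l p * l p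

/-- `𝓛 ⊂ ℝ⁶`: length vectors of genuine decorated ideal hyperbolic tetrahedra, i.e. those
whose associated generalized Euclidean triangle satisfies the strict triangle inequalities. -/
def Ldom : Set (Fin 6 → ℝ) :=
  {l | ∀ i : Fin 3, triSides l i < triSides l (i + 1) + triSides l (i + 2)}

/-- The action of `w ∈ ℝ⁴` on `l ∈ ℝ⁶`: `(w + l)_{ij} = l_{ij} + wᵢ + wⱼ`. -/
def act (w : Fin 4 → ℝ) (l : Fin 6 → ℝ) : Fin 6 → ℝ :=
  fun p => l p + w (endPts p).1 + w (endPts p).2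

/-- `ℝ̂⁴ = {w + 0 : w ∈ ℝ⁴} ⊂ ℝ⁶`. -/
def hatR4 : Set (Fin 6 → ℝ) := {x | ∃ w : Fin 4 → ℝ, x = act w 0}

/-- `i, j, k, h` are pairwise distinct, i.e. `{i,j,k,h} = {1,2,3,4}`. -/
def Distinct4 (i j k h : Fin 4) : Prop :=
  i ≠ j ∧ i ≠ k ∧ i ≠ h ∧ j ≠ k ∧ j ≠ h ∧ k ≠ h


lemma arccos_tri (a b c : ℝ) (ha : 0 < a) (hb : 0 < b) (hc : 0 < c)
    (h1 : a < b + c) (h2 : b < a + c) (h3 : c < a + b) :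
    arccos ((b^2+c^2-a^2)/(2*b*c)) + arccos ((a^2+c^2-b^2)/(2*a*c))
      + arccos ((a^2+b^2-c^2)/(2*a*b)) = π := by
  set u1 := (b^2+c^2-a^2)/(2*b*c) with hu1def
  set u2 := (a^2+c^2-b^2)/(2*a*c) with hu2def
  set u3 := (a^2+b^2-c^2)/(2*a*b) with hu3def
  have hbc : (0:ℝ) < 2*b*c := by positivity
  have hac : (0:ℝ) < 2*a*c := by positivity
  have hab : (0:ℝ) < 2*a*b := by positivity
  have hu1lt : u1 < 1 := by rw [hu1def, div_lt_one hbc]; nlinarith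
  have hu1gt : -1 < u1 := by rw [hu1def, lt_div_iff₀ hbc]; nlinarith
  have hu2lt : u2 < 1 := by rw [hu2def, div_lt_one hac]; nlinarith
  have hu2gt : -1 < u2 := by rw [hu2def, lt_div_iff₀ hac]; nlinarith
  have hu3lt : u3 < 1 := by rw [hu3def, div_lt_one hab]; nlinarith
  have hu3gt : -1 < u3 := by rw [hu3def, lt_div_iff₀ hab]; nlinarith
  set Q : ℝ := (a+b+c)*(b+c-a)*(a+c-b)*(a+b-c) with hQdef
  have hQpos : 0 < Q := by
    apply mul_pos (mul_pos (mul_pos (by linarith) (by linarith)) (by linarith)) (by linarith)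
  set S : ℝ := Real.sqrt Q with hSdef
  have hSpos : 0 < S := Real.sqrt_pos.mpr hQpos
  have hSS : S * S = Q := Real.mul_self_sqrt hQpos.le
  have s1 : Real.sqrt (1 - u1^2) = S / (2*b*c) := by
    have h : 1 - u1^2 = Q / (2*b*c)^2 := by
      rw [hu1def, hQdef]; field_simp; ring
    rw [h, Real.sqrt_div hQpos.le, Real.sqrt_sq hbc.le]
  have s2 : Real.sqrt (1 - u2^2) = S / (2*a*c) := by
    have h : 1 - u2^2 = Q / (2*a*c)^2 := by
      rw [hu2def, hQdef]; field_simp; ring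
    rw [h, Real.sqrt_div hQpos.le, Real.sqrt_sq hac.le]
  have s3 : Real.sqrt (1 - u3^2) = S / (2*a*b) := by
    have h : 1 - u3^2 = Q / (2*a*b)^2 := by
      rw [hu3def, hQdef]; field_simp; ring
    rw [h, Real.sqrt_div hQpos.le, Real.sqrt_sq hab.le]
  set A1 := arccos u1
  set A2 := arccos u2
  set A3 := arccos u3
  have hcos12 : Real.cos (A1 + A2) = -u3 := by
    rw [Real.cos_add, Real.cos_arccos hu1gt.le hu1lt.le, Real.cos_arccos hu2gt.le hu2lt.le,
      Real.sin_arccos, Real.sin_arccos, s1, s2]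
    have : S / (2*b*c) * (S / (2*a*c)) = Q / ((2*b*c)*(2*a*c)) := by
      rw [div_mul_div_comm, hSS]
    rw [this, hu1def, hu2def, hu3def, hQdef]
    field_simp; ring
  have hsin12 : Real.sin (A1 + A2) = S / (2*a*b) := by
    rw [Real.sin_add, Real.cos_arccos hu1gt.le hu1lt.le, Real.cos_arccos hu2gt.le hu2lt.le,
      Real.sin_arccos, Real.sin_arccos, s1, s2, hu1def, hu2def]
    field_simp; ring
  have hA1mem : 0 ≤ A1 ∧ A1 ≤ π := ⟨Real.arccos_nonneg _, Real.arccos_le_pi _⟩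
  have hA2mem : 0 ≤ A2 ∧ A2 ≤ π := ⟨Real.arccos_nonneg _, Real.arccos_le_pi _⟩
  have h12le : A1 + A2 ≤ π := by
    by_contra h
    push_neg at h
    have hs : Real.sin (A1 + A2 - π) ≥ 0 :=
      Real.sin_nonneg_of_nonneg_of_le_pi (by linarith) (by linarith)
    rw [Real.sin_sub_pi] at hs
    have : 0 < S / (2*a*b) := div_pos hSpos hab
    rw [hsin12] at hs; linarith
  have h12 : A1 + A2 = π - A3 := by
    have := Real.arccos_cos (by linarith [hA1mem.1, hA2mem.1] : (0:ℝ) ≤ A1 + A2) h12le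
    rw [hcos12, Real.arccos_neg] at this
    linarith
  linarith

lemma genAngle0 (x : Fin 3 → ℝ) : genAngle x 0 =
    if x 1 + x 2 ≤ x 0 then Real.pi
    else if x 0 + x 2 ≤ x 1 ∨ x 0 + x 1 ≤ x 2 then 0
    else Real.arccos ((x 1 ^ 2 + x 2 ^ 2 - x 0 ^ 2) / (2 * x 1 * x 2)) := rfl

lemma genAngle1 (x : Fin 3 → ℝ) : genAngle x 1 =
    if x 2 + x 0 ≤ x 1 then Real.pi
    else if x 1 + x 0 ≤ x 2 ∨ x 1 + x 2 ≤ x 0 then 0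
    else Real.arccos ((x 2 ^ 2 + x 0 ^ 2 - x 1 ^ 2) / (2 * x 2 * x 0)) := rfl

lemma genAngle2 (x : Fin 3 → ℝ) : genAngle x 2 =
    if x 0 + x 1 ≤ x 2 then Real.pi
    else if x 2 + x 1 ≤ x 0 ∨ x 2 + x 0 ≤ x 1 then 0
    else Real.arccos ((x 0 ^ 2 + x 1 ^ 2 - x 2 ^ 2) / (2 * x 0 * x 1)) := rfl

lemma genAngle_sum (x : Fin 3 → ℝ) (hx : ∀ i, 0 < x i) :
    genAngle x 0 + genAngle x 1 + genAngle x 2 = π := by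
  have h0 := hx 0
  have h1 := hx 1
  have h2 := hx 2
  rcases le_or_gt (x 1 + x 2) (x 0) with hd0 | hd0
  · have g0 : genAngle x 0 = π := by rw [genAngle0, if_pos hd0]
    have g1 : genAngle x 1 = 0 := by
      rw [genAngle1, if_neg (not_le.mpr (by linarith)), if_pos (Or.inr hd0)]
    have g2 : genAngle x 2 = 0 := by
      rw [genAngle2, if_neg (not_le.mpr (by linarith)), if_pos (Or.inl (by linarith))]
    rw [g0, g1, g2]; ring
  · rcases le_or_gt (x 2 + x 0) (x 1) with hd1 | hd1
    · have g0 : genAngle x 0 = 0 := by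
        rw [genAngle0, if_neg (not_le.mpr (by linarith)), if_pos (Or.inl (by linarith))]
      have g1 : genAngle x 1 = π := by rw [genAngle1, if_pos hd1]
      have g2 : genAngle x 2 = 0 := by
        rw [genAngle2, if_neg (not_le.mpr (by linarith)), if_pos (Or.inr (by linarith))]
      rw [g0, g1, g2]; ring
    · rcases le_or_gt (x 0 + x 1) (x 2) with hd2 | hd2
      · have g0 : genAngle x 0 = 0 := by
          rw [genAngle0, if_neg (not_le.mpr (by linarith)), if_pos (Or.inr (by linarith))]
        have g1 : genAngle x 1 = 0 := by
          rw [genAngle1, if_neg (not_le.mpr (by linarith)), if_pos (Or.inl (by linarith))]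
        have g2 : genAngle x 2 = π := by rw [genAngle2, if_pos hd2]
        rw [g0, g1, g2]; ring
      · have g0 : genAngle x 0 = arccos ((x 1 ^ 2 + x 2 ^ 2 - x 0 ^ 2) / (2 * x 1 * x 2)) := by
          rw [genAngle0, if_neg (not_le.mpr (by linarith)),
            if_neg (by push_neg; exact ⟨by linarith, by linarith⟩)]
        have g1 : genAngle x 1 = arccos ((x 0 ^ 2 + x 2 ^ 2 - x 1 ^ 2) / (2 * x 0 * x 2)) := by
          rw [genAngle1, if_neg (not_le.mpr (by linarith)),
            if_neg (by push_neg; exact ⟨by linarith, by linarith⟩)]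
          norm_num [mul_comm]
          congr 1
          ring
        have g2 : genAngle x 2 = arccos ((x 0 ^ 2 + x 1 ^ 2 - x 2 ^ 2) / (2 * x 0 * x 1)) := by
          rw [genAngle2, if_neg (not_le.mpr (by linarith)),
            if_neg (by push_neg; exact ⟨by linarith, by linarith⟩)]
        rw [g0, g1, g2]
        exact arccos_tri (x 0) (x 1) (x 2) h0 h1 h2 hd0 (by linarith) hd2

lemma genAngle_smul (c : ℝ) (hc : 0 < c) (x : Fin 3 → ℝ) (hx : ∀ j, 0 < x j) (i : Fin 3) :
    genAngle (fun j => c * x j) i = genAngle x i := by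
  unfold genAngle
  have hcond1 : (c * x (i+1) + c * x (i+2) ≤ c * x i) ↔ (x (i+1) + x (i+2) ≤ x i) := by
    rw [← mul_add, mul_le_mul_iff_right₀ hc]
  have hcond2 : (c * x i + c * x (i+2) ≤ c * x (i+1)) ↔ (x i + x (i+2) ≤ x (i+1)) := by
    rw [← mul_add, mul_le_mul_iff_right₀ hc]
  have hcond3 : (c * x i + c * x (i+1) ≤ c * x (i+2)) ↔ (x i + x (i+1) ≤ x (i+2)) := by
    rw [← mul_add, mul_le_mul_iff_right₀ hc]
  have h1 := hx (i+1)
  have h2 := hx (i+2)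
  have harg : ((c * x (i+1))^2 + (c * x (i+2))^2 - (c * x i)^2) / (2 * (c * x (i+1)) * (c * x (i+2)))
      = (x (i+1)^2 + x (i+2)^2 - x i^2) / (2 * x (i+1) * x (i+2)) := by
    rw [div_eq_div_iff (by positivity) (by positivity)]; ring
  simp only [hcond1, hcond2, hcond3, harg]

lemma triSides_pos (l : Fin 6 → ℝ) (k : Fin 3) : 0 < triSides l k := by
  unfold triSides; split_ifs <;> exact Real.exp_pos _

lemma triSides_act (w : Fin 4 → ℝ) (l : Fin 6 → ℝ) (k : Fin 3) :
    triSides (act w l) k = Real.exp ((w 0 + w 1 + w 2 + w 3) / 2) * triSides l k := by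
  fin_cases k
  · show Real.exp ((act w l 0 + act w l 5) / 2)
        = Real.exp ((w 0 + w 1 + w 2 + w 3) / 2) * Real.exp ((l 0 + l 5) / 2)
    rw [← Real.exp_add]
    show Real.exp (((l 0 + w 0 + w 1) + (l 5 + w 2 + w 3)) / 2) = _
    congr 1; ring
  · show Real.exp ((act w l 1 + act w l 4) / 2)
        = Real.exp ((w 0 + w 1 + w 2 + w 3) / 2) * Real.exp ((l 1 + l 4) / 2)
    rw [← Real.exp_add]
    show Real.exp (((l 1 + w 0 + w 2) + (l 4 + w 1 + w 3)) / 2) = _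
    congr 1; ring
  · show Real.exp ((act w l 2 + act w l 3) / 2)
        = Real.exp ((w 0 + w 1 + w 2 + w 3) / 2) * Real.exp ((l 2 + l 3) / 2)
    rw [← Real.exp_add]
    show Real.exp (((l 2 + w 0 + w 3) + (l 3 + w 1 + w 2)) / 2) = _
    congr 1; ring

lemma dihedral_act (w : Fin 4 → ℝ) (l : Fin 6 → ℝ) (p : Fin 6) :
    dihedral (act w l) p = dihedral l p := by
  unfold dihedral
  have h : triSides (act w l) = fun k => Real.exp ((w 0 + w 1 + w 2 + w 3) / 2) * triSides l k :=
    funext (triSides_act w l)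
  rw [h, genAngle_smul _ (Real.exp_pos _) _ (triSides_pos l)]

/-- if `α ∈ ℝ⁶` has equal opposite entries and vertex sums `π`, then
`F_α(l) = cov(l) − α·l` is invariant under the `ℝ⁴`-action on `ℝ⁶`. -/
theorem Falpha_invariant_under_action (α : Fin 6 → ℝ)
    (hopp : ∀ i j k h : Fin 4, Distinct4 i j k h → α (edgeOf i j) = α (edgeOf k h))
    (hsum : ∀ i j k h : Fin 4, Distinct4 i j k h →
      α (edgeOf i j) + α (edgeOf i k) + α (edgeOf i h) = Real.pi) :
    ∀ (l : Fin 6 → ℝ) (w : Fin 4 → ℝ),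
      cov6 (act w l) - ∑ p : Fin 6, α p * act w l p
        = cov6 l - ∑ p : Fin 6, α p * l p := by
  intro l w
  have hvol : vol6 (act w l) = vol6 l := by
    unfold vol6
    congr 1
    exact Finset.sum_congr rfl fun p _ => by rw [dihedral_act]
  have d4 : ∀ i j k h : Fin 4, i ≠ j → i ≠ k → i ≠ h → j ≠ k → j ≠ h → k ≠ h →
      Distinct4 i j k h := fun _ _ _ _ a b c d e f => ⟨a, b, c, d, e, f⟩
  have hα0 : α 0 + α 1 + α 2 = π :=
    hsum 0 1 2 3 (d4 _ _ _ _ (by decide) (by decide) (by decide) (by decide) (by decide) (by decide))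
  have hα1 : α 0 + α 3 + α 4 = π :=
    hsum 1 0 2 3 (d4 _ _ _ _ (by decide) (by decide) (by decide) (by decide) (by decide) (by decide))
  have hα2 : α 1 + α 3 + α 5 = π :=
    hsum 2 0 1 3 (d4 _ _ _ _ (by decide) (by decide) (by decide) (by decide) (by decide) (by decide))
  have hα3 : α 2 + α 4 + α 5 = π :=
    hsum 3 0 1 2 (d4 _ _ _ _ (by decide) (by decide) (by decide) (by decide) (by decide) (by decide))
  have hA := genAngle_sum (triSides l) (triSides_pos l)
  have hd0 : dihedral l 0 = genAngle (triSides l) 0 := rfl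
  have hd1 : dihedral l 1 = genAngle (triSides l) 1 := rfl
  have hd2 : dihedral l 2 = genAngle (triSides l) 2 := rfl
  have hd3 : dihedral l 3 = genAngle (triSides l) 2 := rfl
  have hd4 : dihedral l 4 = genAngle (triSides l) 1 := rfl
  have hd5 : dihedral l 5 = genAngle (triSides l) 0 := rfl
  unfold cov6
  rw [hvol]
  have hact : ∀ p, act w l p = l p + w (endPts p).1 + w (endPts p).2 := fun _ => rfl
  have hD : ∀ p, dihedral (act w l) p = dihedral l p := dihedral_act w l
  have e0 : endPts 0 = (0, 1) := rfl
  have e1 : endPts 1 = (0, 2) := rfl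
  have e2 : endPts 2 = (0, 3) := rfl
  have e3 : endPts 3 = (1, 2) := rfl
  have e4 : endPts 4 = (1, 3) := rfl
  have e5 : endPts 5 = (2, 3) := rfl
  simp only [Fin.sum_univ_six, hD, hact, e0, e1, e2, e3, e4, e5]
  rw [hd0, hd1, hd2, hd3, hd4, hd5]
  linear_combination (w 0 + w 1 + w 2 + w 3) * hA - w 0 * hα0 - w 1 * hα1 - w 2 * hα2 - w 3 * hα3
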